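/- Let Γ be a countable left-orderable group and suppose there exists a Γ-invariant probability measure on the compact space O of left-invariant orders on Γ (with Γ acting by right translation). Then Γ admits a left-invariant order that is recurrent for every cyclic subgroup. -/

import Mathlib

open MeasureTheory

/-- `r` is a left-invariant (strict total) order on the group `Γ`. -/
def IsLeftInvariantOrder {Γ : Type*} [Group Γ] (r : Γ → Γ → Prop) : Prop :=
  (∀ a, ¬ r a a) ∧ (∀ a b c, r a b → r b c → r a c) ∧
  (∀ a b, a ≠ b → r a b ∨ r b a) ∧ (∀ γ a b, r a b → r (γ * a) (γ * b))

/-- The order `r` is recurrent for every cyclic subgroup: for every `γ` and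
every increasing chain `λ₁ ≺ ⋯ ≺ λ_r` there exist arbitrarily large positive
integers `n` with `λ₁γⁿ ≺ ⋯ ≺ λ_rγⁿ`. -/
def IsRecurrentOrder {Γ : Type*} [Group Γ] (r : Γ → Γ → Prop) : Prop :=
  ∀ (γ : Γ) (k : ℕ) (lam : Fin k → Γ),
    (∀ i j : Fin k, i < j → r (lam i) (lam j)) →
    ∀ N : ℕ, ∃ n : ℕ, N ≤ n ∧ 0 < n ∧
      ∀ i j : Fin k, i < j → r (lam i * γ ^ n) (lam j * γ ^ n)

/-- Right translation by `γ` on the ambient space `Γ × Γ → Bool` of encoded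
relations. -/
def actB {Γ : Type*} [Group Γ] (γ : Γ) (f : Γ × Γ → Bool) : Γ × Γ → Bool :=
  fun p => f (p.1 * γ⁻¹, p.2 * γ⁻¹)

lemma actB_iterate {Γ : Type*} [Group Γ] (γ : Γ) (n : ℕ) (f : Γ × Γ → Bool) (p : Γ × Γ) :
    (actB γ)^[n] f p = f (p.1 * γ⁻¹ ^ n, p.2 * γ⁻¹ ^ n) := by
  induction n generalizing f with
  | zero => simp
  | succ n ih =>
    rw [Function.iterate_succ_apply, ih]
    simp only [actB, mul_assoc, ← pow_succ]

lemma actB_measurable {Γ : Type*} [Group Γ] (γ : Γ) :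
    Measurable (actB γ : (Γ × Γ → Bool) → (Γ × Γ → Bool)) :=
  measurable_pi_lambda _ (fun p => measurable_pi_apply _)

/-- If a countable left-orderable group has an invariant probability measure on
its space of left-invariant orders, then it admits a left-invariant order that
is recurrent for every cyclic subgroup. -/
theorem recurrent_order_of_invariant_measure {Γ : Type*} [Group Γ] [Countable Γ]
    (hLO : ∃ r : Γ → Γ → Prop, IsLeftInvariantOrder r)
    (μ : Measure (Γ × Γ → Bool)) (hprob : IsProbabilityMeasure μ)
    (hconc : μ {f : Γ × Γ → Bool | IsLeftInvariantOrder (fun a b => f (a, b) = true)}ᶜ = 0)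
    (hinv : ∀ γ : Γ, Measure.map (actB γ) μ = μ) :
    ∃ r : Γ → Γ → Prop, IsLeftInvariantOrder r ∧ IsRecurrentOrder r := by
  classical
  have hcons : ∀ γ : Γ, Conservative (actB γ) μ := fun γ =>
    (MeasurePreserving.mk (actB_measurable γ) (hinv γ)).conservative
  -- cylinder sets indexed by finite chains
  let S : (Σ k : ℕ, Fin k → Γ) → Set (Γ × Γ → Bool) :=
    fun kl => {g | ∀ i j : Fin kl.1, i < j → g (kl.2 i, kl.2 j) = true}
  have hSmeas : ∀ kl, MeasurableSet (S kl) := by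
    intro kl
    have : S kl = ⋂ (i : Fin kl.1) (j : Fin kl.1) (_ : i < j),
        (fun g : Γ × Γ → Bool => g (kl.2 i, kl.2 j)) ⁻¹' {true} := by
      ext g; simp [S, Set.mem_iInter]
    rw [this]
    exact MeasurableSet.iInter fun i => MeasurableSet.iInter fun j =>
      MeasurableSet.iInter fun _ =>
        (measurable_pi_apply _) (measurableSet_singleton true)
  have key : ∀ γ : Γ, ∀ kl, ∀ᵐ g ∂μ, g ∈ S kl →
      ∃ᶠ n in Filter.atTop, (actB γ)^[n] g ∈ S kl := fun γ kl =>
    (hcons γ).ae_mem_imp_frequently_image_mem (hSmeas kl).nullMeasurableSet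
  have hΩ : ∀ᵐ g ∂μ, IsLeftInvariantOrder (fun a b => g (a, b) = true) := by
    rw [MeasureTheory.ae_iff]
    exact hconc
  have hae : ∀ᵐ g ∂μ, IsLeftInvariantOrder (fun a b => g (a, b) = true) ∧
      ∀ γ : Γ, ∀ kl, g ∈ S kl → ∃ᶠ n in Filter.atTop, (actB γ)^[n] g ∈ S kl :=
    hΩ.and ((ae_all_iff).2 fun γ => (ae_all_iff).2 fun kl => key γ kl)
  obtain ⟨f, hf_ord, hf_rec⟩ := hae.exists
  refine ⟨fun a b => f (a, b) = true, hf_ord, ?_⟩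
  intro γ k lam hchain N
  have hmem : f ∈ S ⟨k, lam⟩ := fun i j hij => hchain i j hij
  have hfreq := hf_rec γ⁻¹ ⟨k, lam⟩ hmem
  obtain ⟨n, hn, hnS⟩ := Filter.frequently_atTop.mp hfreq (max N 1)
  refine ⟨n, le_trans (le_max_left _ _) hn, lt_of_lt_of_le (lt_of_lt_of_le Nat.one_pos (le_max_right N 1)) hn, ?_⟩
  intro i j hij
  have := hnS i j hij
  rwa [actB_iterate, inv_inv] at this
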